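/- Let p be an odd prime, m = (p-1)/2, and let x, y be positive integers. Then the sum over all pairs (a, b) with m ≤ a, b ≤ p-1 of (-1)^(a+b) · C(a, m)^x · C(b, m)^x · C(a+b, p-1)^y · C(p-1, a) · C(p-1, b) is congruent to 1 modulo p (in particular, it is not divisible by p). -/
import Mathlib

theorem aux_choose_sub_one (p : ℕ) (hp : p.Prime) (k : ℕ) (hk : k ≤ p - 1) :
    ((p - 1).choose k : ZMod p) = (-1) ^ k := by
  induction k with
  | zero => simp
  | succ n ih =>
    have hn : n ≤ p - 1 := by omega
    have hp2 := hp.two_le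
    have hpas : (p - 1).choose n + (p - 1).choose (n + 1) = p.choose (n + 1) := by
      have hpe : p = (p - 1) + 1 := by omega
      rw [hpe, Nat.choose_succ_succ]; simp
    have hdvd : p ∣ p.choose (n + 1) := hp.dvd_choose_self (by omega) (by omega)
    have hz : (p.choose (n + 1) : ZMod p) = 0 := by
      exact_mod_cast (ZMod.natCast_eq_zero_iff _ p).mpr hdvd
    have : ((p - 1).choose n : ZMod p) + ((p - 1).choose (n + 1) : ZMod p) = 0 := by
      rw [← Nat.cast_add, hpas, hz]
    rw [ih hn] at this
    have := eq_neg_of_add_eq_zero_right this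
    rw [this]; ring

theorem stmt_4 (p : ℕ) (hp : p.Prime) (hodd : Odd p) (m x y : ℕ)
    (hm : m = (p - 1) / 2) (hx : 1 ≤ x) (hy : 1 ≤ y) :
    (∑ a ∈ Finset.Icc m (p - 1), ∑ b ∈ Finset.Icc m (p - 1),
        (-1 : ZMod p) ^ (a + b) * (a.choose m : ZMod p) ^ x * (b.choose m : ZMod p) ^ x *
          ((a + b).choose (p - 1) : ZMod p) ^ y *
          ((p - 1).choose a : ZMod p) * ((p - 1).choose b : ZMod p)) = 1 := by
  have hp2 := hp.two_le
  haveI : NeZero p := ⟨hp.pos.ne'⟩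
  have h2m : p - 1 = 2 * m := by
    rcases hodd with ⟨k, hk⟩; omega
  have hmm : m ∈ Finset.Icc m (p - 1) := by
    rw [Finset.mem_Icc]; omega
  have hzero : ∀ a b : ℕ, a ≤ p - 1 → b ≤ p - 1 → p - 1 < a + b →
      (((a + b).choose (p - 1) : ZMod p)) = 0 := by
    intro a b ha hb hab
    have hdvd : p ∣ (a + b).choose (p - 1) :=
      hp.dvd_choose (by omega) (by omega) (by omega)
    exact_mod_cast (ZMod.natCast_eq_zero_iff _ p).mpr hdvd
  rw [Finset.sum_eq_single_of_mem m hmm]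
  · rw [Finset.sum_eq_single_of_mem m hmm]
    · have h1 : m + m = p - 1 := by omega
      rw [h1, Nat.choose_self, aux_choose_sub_one p hp m (by omega)]
      simp only [Nat.choose_self, Nat.cast_one, one_pow, mul_one]
      rw [← h1, ← pow_add, ← pow_add]
      have hev : Even (m + m + m + m) := ⟨m + m, by ring⟩
      exact Even.neg_one_pow hev
    · intro b hb hbm
      have hb' := Finset.mem_Icc.mp hb
      rw [hzero m b (by omega) hb'.2 (by omega), zero_pow (by omega : y ≠ 0)]
      ring
  · intro a ha ham
    have ha' := Finset.mem_Icc.mp ha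
    apply Finset.sum_eq_zero
    intro b hb
    have hb' := Finset.mem_Icc.mp hb
    rw [hzero a b ha'.2 hb'.2 (by omega), zero_pow (by omega : y ≠ 0)]
    ring
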